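/- Let v ∈ ℝ^n with Tv ∈ ℤ^n for some T > 0, and let u ∈ C^1(𝒟_R). Define χ = T ∫₀¹ (u − [u]_v)∘X^t_{Tv} · t dt, where X^t_{Tv}(θ,I) = (θ + tTv, I). Then {χ, l_v} = u − [u]_v; that is, v · ∂_θ χ(θ,I) = u(θ,I) − [u]_v(θ,I) for all (θ,I) ∈ 𝒟_R. Moreover, if u ∈ C^i(𝒟_R), then χ ∈ C^i(𝒟_R) with |χ|_i ≤ T |u|_i. -/

import Mathlib

open scoped BigOperators Topology
open Filter Set

namespace NFpaper

/-- Phase space `ℝ^n × ℝ^n`; the first factor is the universal cover of `𝕋^n`. -/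
abbrev Phase (n : ℕ) := (Fin n → ℝ) × (Fin n → ℝ)

/-- The domain `𝒟_R = 𝕋^n × B_R` (described via lifts: no condition on the angles). -/
def Dom (n : ℕ) (R : ℝ) : Set (Phase n) := {p | ‖p.2‖ ≤ R}

/-- Closed ball `B_R` in the action space, for the sup norm. -/
def Ball (n : ℕ) (R : ℝ) : Set (Fin n → ℝ) := {I | ‖I‖ ≤ R}

/-- `f` is the lift of a function on `𝕋^n × ℝ^n`. -/
def PeriodicTheta {n : ℕ} (f : Phase n → ℝ) : Prop :=
  ∀ (m : Fin n → ℤ) (θ I : Fin n → ℝ), f (θ + (fun i => (m i : ℝ)), I) = f (θ, I)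

/-- `f` is the lift of a function on `𝕋^n`. -/
def PeriodicThetaV {n : ℕ} (f : (Fin n → ℝ) → ℝ) : Prop :=
  ∀ (m : Fin n → ℤ) (θ : Fin n → ℝ), f (θ + (fun i => (m i : ℝ))) = f θ

/-- `Φ` is the lift of a map of `𝕋^n × ℝ^n` to itself. -/
def PeriodicMap {n : ℕ} (Φ : Phase n → Phase n) : Prop :=
  ∀ (m : Fin n → ℤ) (θ I : Fin n → ℝ),
    Φ (θ + (fun i => (m i : ℝ)), I) =
      ((Φ (θ, I)).1 + (fun i => (m i : ℝ)), (Φ (θ, I)).2)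

/-- The linear Hamiltonian `l_ω (θ, I) = ω · I`. -/
def lin {n : ℕ} (ω : Fin n → ℝ) : Phase n → ℝ := fun p => ∑ i, ω i * p.2 i

/-- The Hamiltonian flow `X^t_w` of `l_w`. -/
def linFlow {n : ℕ} (w : Fin n → ℝ) (t : ℝ) (x : Phase n) : Phase n := (x.1 + t • w, x.2)

/-- The time average `[g]_w` along the linear flow with frequency `w`. -/
noncomputable def timeAvg {n : ℕ} (w : Fin n → ℝ) (g : Phase n → ℝ) (x : Phase n) : ℝ :=
  limUnder atTop (fun s : ℝ => (1 / s) * ∫ t in (0:ℝ)..s, g (linFlow w t x))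

/-- Iterated averages `[⋯[[g]_{v 0}]_{v 1}⋯]_{v (j-1)}`. -/
noncomputable def iterAvg {n : ℕ} :
    ∀ j : ℕ, (Fin j → (Fin n → ℝ)) → (Phase n → ℝ) → (Phase n → ℝ)
  | 0, _, g => g
  | (j+1), v, g => timeAvg (v (Fin.last j)) (iterAvg j (fun i => v i.castSucc) g)

/-- Poisson bracket, with derivatives taken within `s`. -/
noncomputable def pb {n : ℕ} (s : Set (Phase n)) (f g : Phase n → ℝ) (x : Phase n) : ℝ :=
  ∑ j : Fin n,
    (fderivWithin ℝ f s x ((0 : Fin n → ℝ), (Pi.single j 1 : Fin n → ℝ)) *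
        fderivWithin ℝ g s x ((Pi.single j 1 : Fin n → ℝ), (0 : Fin n → ℝ))
      - fderivWithin ℝ f s x ((Pi.single j 1 : Fin n → ℝ), (0 : Fin n → ℝ)) *
        fderivWithin ℝ g s x ((0 : Fin n → ℝ), (Pi.single j 1 : Fin n → ℝ)))

/-- The canonical symplectic form on `ℝ^n × ℝ^n`. -/
def symp {n : ℕ} (u v : Phase n) : ℝ := ∑ j, (u.2 j * v.1 j - u.1 j * v.2 j)

/-- `Φ` is symplectic on `s`: its differential preserves the canonical symplectic form. -/
def SymplecticOn {n : ℕ} (Φ : Phase n → Phase n) (s : Set (Phase n)) : Prop :=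
  ∀ x ∈ s, ∀ u v : Phase n,
    symp (fderivWithin ℝ Φ s x u) (fderivWithin ℝ Φ s x v) = symp u v

/-- The Hamiltonian vector field `X_H = (∂_I H, -∂_θ H)` (derivatives within `s`). -/
noncomputable def hamVF {n : ℕ} (s : Set (Phase n)) (H : Phase n → ℝ) (x : Phase n) : Phase n :=
  ((fun j => fderivWithin ℝ H s x ((0 : Fin n → ℝ), (Pi.single j 1 : Fin n → ℝ))),
   (fun j => -fderivWithin ℝ H s x ((Pi.single j 1 : Fin n → ℝ), (0 : Fin n → ℝ))))

/-- Vectors with integer components. -/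
def IsIntVec {n : ℕ} (x : Fin n → ℝ) : Prop := ∀ i, ∃ z : ℤ, x i = z

/-- Rational subspaces: subspaces spanned by integer vectors. -/
def IsRationalSub {n : ℕ} (V : Submodule ℝ (Fin n → ℝ)) : Prop :=
  ∃ S : Set (Fin n → ℝ), (∀ v ∈ S, IsIntVec v) ∧ V = Submodule.span ℝ S

/-- `F_ω`: the smallest rational subspace containing `ω`. -/
noncomputable def Fspace {n : ℕ} (ω : Fin n → ℝ) : Submodule ℝ (Fin n → ℝ) :=
  sInf {V | IsRationalSub V ∧ ω ∈ V}

/-- `v` is a `T`-periodic vector. -/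
def IsPeriodic {n : ℕ} (v : Fin n → ℝ) (T : ℝ) : Prop :=
  v ≠ 0 ∧ 0 < T ∧ IsIntVec (T • v) ∧ ∀ t : ℝ, 0 < t → IsIntVec (t • v) → T ≤ t

/-- The constant `Q_ω`. -/
noncomputable def Qmin {n : ℕ} (ω : Fin n → ℝ) : ℝ :=
  sInf {Q : ℝ | ∃ z : Fin n → ℤ, z ≠ 0 ∧ ((fun i => (z i : ℝ)) : Fin n → ℝ) ∈ Fspace ω ∧
    ‖((fun i => (z i : ℝ)) : Fin n → ℝ)‖ ≤ Q}

/-- The function `Ψ_ω`. -/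
noncomputable def Psi {n : ℕ} (ω : Fin n → ℝ) (Q : ℝ) : ℝ :=
  sSup {y : ℝ | ∃ z : Fin n → ℤ, z ≠ 0 ∧ ((fun i => (z i : ℝ)) : Fin n → ℝ) ∈ Fspace ω ∧
    ‖((fun i => (z i : ℝ)) : Fin n → ℝ)‖ ≤ Q ∧ y = |∑ i, (z i : ℝ) * ω i|⁻¹}

/-- The function `Δ_ω`. -/
noncomputable def Delta {n : ℕ} (ω : Fin n → ℝ) (Q : ℝ) : ℝ := Q * Psi ω Q

/-- The function `Δ*_ω`. -/
noncomputable def DeltaStar {n : ℕ} (ω : Fin n → ℝ) (x : ℝ) : ℝ :=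
  sSup {Q : ℝ | Qmin ω ≤ Q ∧ Delta ω Q ≤ x}

/-- The set of Diophantine vectors `Ω_d(γ, τ)`. -/
def Dio {n : ℕ} (d : ℕ) (γ τ : ℝ) (ω : Fin n → ℝ) : Prop :=
  Module.finrank ℝ (Fspace ω) = d ∧ ∀ Q : ℝ, Qmin ω ≤ Q → Psi ω Q ≤ γ⁻¹ * Q ^ τ

/-- The orthogonal projection `Π_F` onto `F = F_ω` for the Euclidean scalar product. -/
noncomputable def projF {n : ℕ} (ω : Fin n → ℝ) (x : Fin n → ℝ) : Fin n → ℝ :=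
  EuclideanSpace.equiv (Fin n) ℝ
    ((Submodule.orthogonalProjection
        ((Fspace ω).map ((EuclideanSpace.equiv (Fin n) ℝ).symm.toLinearEquiv.toLinearMap))
        ((EuclideanSpace.equiv (Fin n) ℝ).symm x) : EuclideanSpace ℝ (Fin n)))

/-- All derivatives of order `≤ k` of `f` are bounded by `M` on `s`. -/
def DerivBoundsOn {E F : Type*} [NormedAddCommGroup E] [NormedSpace ℝ E]
    [NormedAddCommGroup F] [NormedSpace ℝ F]
    (k : ℕ) (f : E → F) (s : Set E) (M : ℝ) : Prop :=
  ∀ i : ℕ, i ≤ k → ∀ x ∈ s, ‖iteratedFDerivWithin ℝ i f s x‖ ≤ M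

/-- `f` is of class `C^k` on `s` with `|f|_{C^k(s)} ≤ M`. -/
def CkNormLE {E F : Type*} [NormedAddCommGroup E] [NormedSpace ℝ E]
    [NormedAddCommGroup F] [NormedSpace ℝ F]
    (k : ℕ) (f : E → F) (s : Set E) (M : ℝ) : Prop :=
  ContDiffOn ℝ k f s ∧ DerivBoundsOn k f s M

/-- The family of directions `(e_{u 0}, 0), …, (0, e_{w (q-1)})` encoding the
partial derivative `∂_θ^{l₁} ∂_I^{l₂}` with `|l₁| = p`, `|l₂| = q`. -/
def mixedDirs (n : ℕ) {p q : ℕ} (u : Fin p → Fin n) (w : Fin q → Fin n) :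
    Fin (p + q) → Phase n :=
  fun i =>
    if h : (i : ℕ) < p then ((Pi.single (u ⟨i, h⟩) 1 : Fin n → ℝ), (0 : Fin n → ℝ))
    else ((0 : Fin n → ℝ),
      (Pi.single (w ⟨(i : ℕ) - p, by have := i.isLt; omega⟩) 1 : Fin n → ℝ))

/-- The gradient `∂_θ S` of a function of the angles. -/
noncomputable def gradV {N : ℕ} (S : (Fin N → ℝ) → ℝ) (θ : Fin N → ℝ) : Fin N → ℝ :=
  fun j => fderiv ℝ S θ (Pi.single j 1)

/-- The splitting matrix `∂²_θ (S⁺ - S⁻) (θ₀)`. -/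
noncomputable def splitMat {N : ℕ} (Sp Sm : (Fin N → ℝ) → ℝ) (θ₀ : Fin N → ℝ) :
    Matrix (Fin N) (Fin N) ℝ :=
  fun i j => fderiv ℝ (fun θ => gradV (fun θ' => Sp θ' - Sm θ') θ j) θ₀ (Pi.single i 1)

end NFpaper
namespace NFpaper

/-- The function `χ = T ∫₀¹ (u - [u]_v) ∘ X^t_{Tv} · t dt`. -/
noncomputable def chi (n : ℕ) (T : ℝ) (v : Fin n → ℝ) (u : Phase n → ℝ)
    (x : Phase n) : ℝ :=
  T * ∫ t in (0:ℝ)..1,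
    (u (linFlow (T • v) t x) - timeAvg v u (linFlow (T • v) t x)) * t

variable {n : ℕ} {R : ℝ}

lemma convex_dom : Convex ℝ (Dom n R) := by
  intro p hp q hq a b ha hb hab
  simp only [Dom, mem_setOf_eq] at *
  calc ‖(a • p + b • q).2‖ = ‖a • p.2 + b • q.2‖ := rfl
    _ ≤ a * ‖p.2‖ + b * ‖q.2‖ := by
        refine (norm_add_le _ _).trans ?_
        rw [norm_smul, norm_smul, Real.norm_eq_abs, Real.norm_eq_abs,
          abs_of_nonneg ha, abs_of_nonneg hb]
    _ ≤ a * R + b * R := by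
        gcongr
    _ = R := by rw [← add_mul, hab, one_mul]

lemma isClosed_dom : IsClosed (Dom n R) :=
  isClosed_le (continuous_norm.comp continuous_snd) continuous_const

lemma uniqueDiffOn_dom (hR : 0 < R) : UniqueDiffOn ℝ (Dom n R) := by
  refine uniqueDiffOn_convex convex_dom ⟨(0, 0), ?_⟩
  rw [mem_interior_iff_mem_nhds]
  refine mem_of_superset (IsOpen.mem_nhds (isOpen_lt (continuous_norm.comp continuous_snd)
    continuous_const) ?_) (fun p hp => by
      simp only [mem_setOf_eq, Function.comp_apply] at hp
      exact le_of_lt hp)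
  simpa using hR

lemma mem_dom_add {x : Phase n} (hx : x ∈ Dom n R) (a : Fin n → ℝ) (t : ℝ) :
    x + t • ((a, 0) : Phase n) ∈ Dom n R := by
  have h2 : (x + t • ((a, 0) : Phase n)).2 = x.2 := by simp
  simpa only [Dom, mem_setOf_eq, h2] using hx


section Parametric

variable {G : Type*} [NormedAddCommGroup G] [NormedSpace ℝ G] [CompleteSpace G]

lemma continuousOn_parametric {a : Fin n → ℝ} {g : Phase n → G}
    (hgc : ContinuousOn g (Dom n R)) {c : ℝ → ℝ} (hc : Continuous c) :
    ContinuousOn (fun y => ∫ t in (0:ℝ)..1, c t • g (y + t • ((a, 0) : Phase n))) (Dom n R) := by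
  intro x hx
  set W : Phase n := ((a, 0) : Phase n) with hWdef
  set s' : Set (Phase n) := Dom n R ∩ Metric.closedBall x 1 with hs'def
  have hs'x : x ∈ s' := ⟨hx, Metric.mem_closedBall_self zero_le_one⟩
  have hs'sub : s' ⊆ Dom n R := inter_subset_left
  have hs'cpt : IsCompact s' := (isCompact_closedBall x 1).inter_left isClosed_dom
  have hKc : IsCompact ((fun p : ℝ × Phase n => p.2 + p.1 • W) '' (Icc (0:ℝ) 1 ×ˢ s')) :=
    (isCompact_Icc.prod hs'cpt).image (by fun_prop)
  have hKs : (fun p : ℝ × Phase n => p.2 + p.1 • W) '' (Icc (0:ℝ) 1 ×ˢ s') ⊆ Dom n R := by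
    rintro _ ⟨⟨t, y⟩, ⟨ht, hy⟩, rfl⟩
    exact mem_dom_add (hs'sub hy) a t
  obtain ⟨C, hC⟩ := hKc.exists_bound_of_continuousOn (hgc.mono hKs)
  obtain ⟨Cc, hCc⟩ := isCompact_Icc.exists_bound_of_continuousOn (hc.continuousOn (s := Icc (0:ℝ) 1))
  rw [← continuousWithinAt_inter (Metric.closedBall_mem_nhds x one_pos)]
  have : Tendsto (fun y => ∫ t in (0:ℝ)..1, c t • g (y + t • W)) (𝓝[s'] x)
      (𝓝 (∫ t in (0:ℝ)..1, c t • g (x + t • W))) := by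
    rw [tendsto_iff_seq_tendsto]
    intro y hy
    have hys : ∀ᶠ k in atTop, y k ∈ s' := hy.eventually eventually_mem_nhdsWithin
    refine intervalIntegral.tendsto_integral_filter_of_dominated_convergence
      (fun _ => Cc * C) ?_ ?_ intervalIntegrable_const ?_
    · filter_upwards [hys] with k hk
      exact (Continuous.smul hc (hgc.comp_continuous (by fun_prop)
        (fun t => mem_dom_add (hs'sub hk) a t))).aestronglyMeasurable
    · filter_upwards [hys] with k hk
      refine Eventually.of_forall (fun t ht => ?_)
      have ht' : t ∈ Icc (0:ℝ) 1 := Ioc_subset_Icc_self (by rwa [uIoc_of_le zero_le_one] at ht)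
      rw [norm_smul]
      exact mul_le_mul (hCc t ht') (hC _ ⟨(t, y k), ⟨ht', hk⟩, rfl⟩) (norm_nonneg _)
        (le_trans (norm_nonneg _) (hCc 0 ⟨le_rfl, zero_le_one⟩))
    · refine Eventually.of_forall (fun t _ => ?_)
      have hcw : ContinuousWithinAt (fun z : Phase n => g (z + t • W)) s' x := by
        refine (ContinuousOn.comp hgc ((by fun_prop : Continuous fun z : Phase n => z + t • W).continuousOn)
          (fun z hz => mem_dom_add (hs'sub hz) a t)).continuousWithinAt hs'x
      exact tendsto_const_nhds.smul (hcw.tendsto.comp hy)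
  exact this


lemma hasFDerivWithinAt_parametric {a : Fin n → ℝ} {g : Phase n → G}
    {g' : Phase n → (Phase n →L[ℝ] G)}
    (hg' : ∀ y ∈ Dom n R, HasFDerivWithinAt g (g' y) (Dom n R) y)
    (hgc : ContinuousOn g (Dom n R)) (hg'c : ContinuousOn g' (Dom n R))
    {c : ℝ → ℝ} (hc : Continuous c) {x : Phase n} (hx : x ∈ Dom n R) :
    HasFDerivWithinAt (fun y => ∫ t in (0:ℝ)..1, c t • g (y + t • ((a, 0) : Phase n)))
      (∫ t in (0:ℝ)..1, c t • g' (x + t • ((a, 0) : Phase n))) (Dom n R) x := by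
  set W : Phase n := ((a, 0) : Phase n) with hWdef
  set s' : Set (Phase n) := Dom n R ∩ Metric.closedBall x 1 with hs'def
  have hs'x : x ∈ s' := ⟨hx, Metric.mem_closedBall_self zero_le_one⟩
  have hs'sub : s' ⊆ Dom n R := inter_subset_left
  have hs'conv : Convex ℝ s' := convex_dom.inter (convex_closedBall x 1)
  have hs'cpt : IsCompact s' := (isCompact_closedBall x 1).inter_left isClosed_dom
  have hKc : IsCompact ((fun p : ℝ × Phase n => p.2 + p.1 • W) '' (Icc (0:ℝ) 1 ×ˢ s')) :=
    (isCompact_Icc.prod hs'cpt).image (by fun_prop)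
  have hKs : (fun p : ℝ × Phase n => p.2 + p.1 • W) '' (Icc (0:ℝ) 1 ×ˢ s') ⊆ Dom n R := by
    rintro _ ⟨⟨t, y⟩, ⟨ht, hy⟩, rfl⟩
    exact mem_dom_add (hs'sub hy) a t
  obtain ⟨C, hC⟩ := hKc.exists_bound_of_continuousOn (hg'c.mono hKs)
  have hC0 : 0 ≤ C :=
    le_trans (norm_nonneg _) (hC (x + (0:ℝ) • W) ⟨(0, x), ⟨⟨le_rfl, zero_le_one⟩, hs'x⟩, rfl⟩)
  obtain ⟨Cc, hCc⟩ := isCompact_Icc.exists_bound_of_continuousOn (hc.continuousOn (s := Icc (0:ℝ) 1))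
  have hCc0 : 0 ≤ Cc := le_trans (norm_nonneg _) (hCc 0 ⟨le_rfl, zero_le_one⟩)
  -- derivative of translated g within s'
  have htrans : ∀ (t : ℝ) {y : Phase n}, y ∈ s' →
      HasFDerivWithinAt (fun z => g (z + t • W)) (g' (y + t • W)) s' y := by
    intro t y hy
    have h1 : HasFDerivWithinAt (fun z : Phase n => z + t • W)
        (ContinuousLinearMap.id ℝ (Phase n)) s' y := (hasFDerivWithinAt_id y s').add_const (t • W)
    have h2 := (hg' (y + t • W) (mem_dom_add (hs'sub hy) a t)).comp y h1
      (fun z hz => mem_dom_add (hs'sub hz) a t)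
    exact h2
  have hlip : ∀ t ∈ Icc (0:ℝ) 1, ∀ y ∈ s',
      ‖g (y + t • W) - g (x + t • W)‖ ≤ C * ‖y - x‖ := by
    intro t ht y hy
    exact hs'conv.norm_image_sub_le_of_norm_hasFDerivWithin_le
      (fun z hz => htrans t hz) (fun z hz => hC _ ⟨(t, z), ⟨ht, hz⟩, rfl⟩) hs'x hy
  -- continuity in t
  have hgy : ∀ {y : Phase n}, y ∈ Dom n R → Continuous fun t : ℝ => g (y + t • W) := by
    intro y hy
    exact hgc.comp_continuous (by fun_prop) (fun t => mem_dom_add hy a t)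
  have hg'x : Continuous fun t : ℝ => g' (x + t • W) :=
    hg'c.comp_continuous (by fun_prop) (fun t => mem_dom_add hx a t)
  rw [← hasFDerivWithinAt_inter (Metric.closedBall_mem_nhds x one_pos)]
  rw [hasFDerivWithinAt_iff_tendsto, tendsto_iff_seq_tendsto]
  intro y hy
  simp only [Function.comp_def]
  have hys : ∀ᶠ k in atTop, y k ∈ s' := hy.eventually eventually_mem_nhdsWithin
  set F : ℕ → ℝ → ℝ := fun k t => ‖y k - x‖⁻¹ *
    ‖c t • (g (y k + t • W) - g (x + t • W) - (g' (x + t • W)) (y k - x))‖ with hFdef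
  have hFbound : ∀ᶠ k in atTop, ∀ᵐ t, t ∈ Set.uIoc (0:ℝ) 1 → ‖F k t‖ ≤ Cc * (C + C) := by
    filter_upwards [hys] with k hk
    refine Eventually.of_forall (fun t ht => ?_)
    have ht' : t ∈ Icc (0:ℝ) 1 := Ioc_subset_Icc_self (by rwa [uIoc_of_le zero_le_one] at ht)
    rcases eq_or_ne (y k) x with h | h
    · have hz : F k t = 0 := by simp [hFdef, h]
      rw [hz, norm_zero]
      exact mul_nonneg hCc0 (by linarith)
    · have h1 : ‖g (y k + t • W) - g (x + t • W)‖ ≤ C * ‖y k - x‖ := hlip t ht' _ hk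
      have h2 : ‖(g' (x + t • W)) (y k - x)‖ ≤ C * ‖y k - x‖ :=
        le_trans (ContinuousLinearMap.le_opNorm _ _)
          (mul_le_mul_of_nonneg_right (hC _ ⟨(t, x), ⟨ht', hs'x⟩, rfl⟩) (norm_nonneg _))
      have h3 : ‖c t • (g (y k + t • W) - g (x + t • W) - (g' (x + t • W)) (y k - x))‖ ≤
          ‖c t‖ * (C * ‖y k - x‖ + C * ‖y k - x‖) := by
        rw [norm_smul]
        refine mul_le_mul_of_nonneg_left ?_ (norm_nonneg _)
        exact le_trans (norm_sub_le _ _) (by gcongr)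
      have hne : ‖y k - x‖ ≠ 0 := norm_ne_zero_iff.2 (sub_ne_zero.2 h)
      calc ‖F k t‖ = ‖y k - x‖⁻¹ *
            ‖c t • (g (y k + t • W) - g (x + t • W) - (g' (x + t • W)) (y k - x))‖ := by
            rw [hFdef]
            simp only [Real.norm_eq_abs, abs_mul, abs_inv, abs_norm, abs_abs]
        _ ≤ ‖y k - x‖⁻¹ * (‖c t‖ * (C * ‖y k - x‖ + C * ‖y k - x‖)) := by
            exact mul_le_mul_of_nonneg_left h3 (by positivity)
        _ = ‖c t‖ * (C + C) * (‖y k - x‖⁻¹ * ‖y k - x‖) := by ring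
        _ = ‖c t‖ * (C + C) := by rw [inv_mul_cancel₀ hne, mul_one]
        _ ≤ Cc * (C + C) := mul_le_mul_of_nonneg_right (hCc t ht') (by linarith)
  have hFmeas : ∀ᶠ k in atTop, MeasureTheory.AEStronglyMeasurable (F k) (MeasureTheory.volume.restrict (Set.uIoc (0:ℝ) 1)) := by
    filter_upwards [hys] with k hk
    have : Continuous (F k) := by
      refine continuous_const.mul (Continuous.norm ?_)
      exact hc.smul (((hgy (hs'sub hk)).sub (hgy hx)).sub (hg'x.clm_apply continuous_const))
    exact this.aestronglyMeasurable
  have hFlim : ∀ t : ℝ, Tendsto (fun k => F k t) atTop (𝓝 0) := by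
    intro t
    have hG := htrans t hs'x
    rw [hasFDerivWithinAt_iff_tendsto] at hG
    have h2 := hG.comp hy
    have h3 := h2.const_mul ‖c t‖
    rw [mul_zero] at h3
    refine h3.congr (fun k => ?_)
    simp only [Function.comp_apply, hFdef, norm_smul]
    ring
  have hDCT : Tendsto (fun k => ∫ t in (0:ℝ)..1, F k t) atTop (𝓝 (∫ t in (0:ℝ)..1, (0:ℝ))) :=
    intervalIntegral.tendsto_integral_filter_of_dominated_convergence (fun _ => Cc * (C + C))
      hFmeas hFbound intervalIntegrable_const
      (Eventually.of_forall fun t _ => hFlim t)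
  rw [intervalIntegral.integral_zero] at hDCT
  refine squeeze_zero' (Eventually.of_forall fun k => by positivity) ?_ hDCT
  filter_upwards [hys] with k hk
  have hint1 : IntervalIntegrable (fun t => c t • g (y k + t • W)) MeasureTheory.volume 0 1 :=
    (hc.smul (hgy (hs'sub hk))).intervalIntegrable 0 1
  have hint2 : IntervalIntegrable (fun t => c t • g (x + t • W)) MeasureTheory.volume 0 1 :=
    (hc.smul (hgy hx)).intervalIntegrable 0 1
  have hint3 : IntervalIntegrable (fun t => c t • g' (x + t • W)) MeasureTheory.volume 0 1 :=
    (hc.smul hg'x).intervalIntegrable 0 1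
  have hint4 : IntervalIntegrable (fun t => (c t • g' (x + t • W)) (y k - x)) MeasureTheory.volume 0 1 := by
    refine Continuous.intervalIntegrable ?_ 0 1
    exact (hc.smul hg'x).clm_apply continuous_const
  have happ : (∫ t in (0:ℝ)..1, c t • g' (x + t • W)) (y k - x) =
      ∫ t in (0:ℝ)..1, (c t • g' (x + t • W)) (y k - x) :=
    ContinuousLinearMap.intervalIntegral_apply hint3 (y k - x)
  have hdiff : (∫ t in (0:ℝ)..1, c t • g (y k + t • W)) - (∫ t in (0:ℝ)..1, c t • g (x + t • W))
      - (∫ t in (0:ℝ)..1, c t • g' (x + t • W)) (y k - x)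
      = ∫ t in (0:ℝ)..1, c t • (g (y k + t • W) - g (x + t • W) - (g' (x + t • W)) (y k - x)) := by
    rw [happ, ← intervalIntegral.integral_sub hint1 hint2,
      ← intervalIntegral.integral_sub (hint1.sub hint2) hint4]
    congr 1
    funext t
    simp [smul_sub]
  calc ‖y k - x‖⁻¹ * ‖(∫ t in (0:ℝ)..1, c t • g (y k + t • W)) -
        (∫ t in (0:ℝ)..1, c t • g (x + t • W)) -
        (∫ t in (0:ℝ)..1, c t • g' (x + t • W)) (y k - x)‖
      = ‖y k - x‖⁻¹ * ‖∫ t in (0:ℝ)..1,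
          c t • (g (y k + t • W) - g (x + t • W) - (g' (x + t • W)) (y k - x))‖ := by rw [hdiff]
    _ ≤ ‖y k - x‖⁻¹ * ∫ t in (0:ℝ)..1,
          ‖c t • (g (y k + t • W) - g (x + t • W) - (g' (x + t • W)) (y k - x))‖ := by
        refine mul_le_mul_of_nonneg_left ?_ (by positivity)
        exact intervalIntegral.norm_integral_le_integral_norm zero_le_one
    _ = ∫ t in (0:ℝ)..1, F k t := by
        rw [← intervalIntegral.integral_const_mul]

end Parametric


section Avg

variable {T : ℝ} {v : Fin n → ℝ} {u : Phase n → ℝ}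

lemma uper (hTv : IsIntVec (T • v)) (hu : PeriodicTheta u) (y : Phase n) :
    u (y + ((T • v : Fin n → ℝ), (0 : Fin n → ℝ))) = u y := by
  choose m hm using hTv
  have hw : (fun i => ((m i : ℝ))) = T • v := funext fun i => (hm i).symm
  have h1 : y + (((T • v : Fin n → ℝ)), (0 : Fin n → ℝ)) = (y.1 + fun i => ((m i : ℝ)), y.2) := by
    rw [hw]
    exact Prod.ext rfl (add_zero _)
  rw [h1, hu m y.1 y.2]

lemma linFlow_eq (w : Fin n → ℝ) (t : ℝ) (x : Phase n) :
    linFlow w t x = x + t • ((w, 0) : Phase n) := by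
  refine Prod.ext rfl ?_
  simp [linFlow]

lemma smul_pair (t : ℝ) (w : Fin n → ℝ) :
    t • ((w, 0) : Phase n) = ((t • w : Fin n → ℝ), (0 : Fin n → ℝ)) := by
  refine Prod.ext rfl ?_
  simp

lemma timeAvg_eq (hT : 0 < T) (hTv : IsIntVec (T • v)) (hu : PeriodicTheta u)
    (huc : ContinuousOn u (Dom n R)) {x : Phase n} (hx : x ∈ Dom n R) :
    timeAvg v u x = ∫ t in (0:ℝ)..1, u (x + t • (((T • v : Fin n → ℝ), 0) : Phase n)) := by
  set g : ℝ → ℝ := fun t => u (x + t • ((v, 0) : Phase n)) with hgdef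
  have hmem : ∀ t : ℝ, x + t • ((v, 0) : Phase n) ∈ Dom n R := fun t => mem_dom_add hx v t
  have hgc : Continuous g := huc.comp_continuous (by fun_prop) hmem
  have hTW : T • ((v, 0) : Phase n) = (((T • v : Fin n → ℝ), 0) : Phase n) := smul_pair T v
  have hgper : Function.Periodic g T := by
    intro t
    show u (x + (t + T) • ((v, 0) : Phase n)) = u (x + t • ((v, 0) : Phase n))
    rw [add_smul, ← add_assoc, hTW]
    exact uper hTv hu _
  have hgint : ∀ t₁ t₂ : ℝ, IntervalIntegrable g MeasureTheory.volume t₁ t₂ :=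
    fun t₁ t₂ => hgc.intervalIntegrable t₁ t₂
  obtain ⟨B, hB⟩ := (isCompact_Icc (a := (0:ℝ)) (b := T)).exists_bound_of_continuousOn
    hgc.continuousOn
  have hB0 : 0 ≤ B := le_trans (norm_nonneg _) (hB 0 ⟨le_rfl, le_of_lt hT⟩)
  have hgB : ∀ t : ℝ, |g t| ≤ B := by
    intro t
    obtain ⟨t', ht', h⟩ := hgper.exists_mem_Ico₀ hT t
    rw [h]
    exact hB t' ⟨ht'.1, le_of_lt ht'.2⟩
  set μ : ℝ := ∫ t in (0:ℝ)..T, g t with hμdef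
  set D : ℝ := |μ| + B * T with hDdef
  -- the main limit
  have hlim : Tendsto (fun s : ℝ => (1 / s) * ∫ t in (0:ℝ)..s, g t) atTop (𝓝 (μ / T)) := by
    rw [tendsto_iff_dist_tendsto_zero]
    have hD : Tendsto (fun s : ℝ => D / s) atTop (𝓝 0) :=
      tendsto_const_nhds.div_atTop tendsto_id
    refine squeeze_zero' (Eventually.of_forall fun s => dist_nonneg) ?_ hD
    filter_upwards [eventually_ge_atTop (1:ℝ)] with s hs
    have hs0 : (0:ℝ) < s := lt_of_lt_of_le one_pos hs
    set k : ℤ := ⌊s / T⌋ with hkdef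
    have hk0 : 0 ≤ (k:ℝ) := by
      have : (0:ℝ) ≤ s / T := div_nonneg (le_of_lt hs0) (le_of_lt hT)
      exact_mod_cast Int.floor_nonneg.2 this
    have hkT : (k:ℝ) * T ≤ s := by
      have h1 : (k : ℝ) ≤ s / T := Int.floor_le _
      calc (k:ℝ) * T ≤ (s / T) * T := mul_le_mul_of_nonneg_right h1 hT.le
        _ = s := div_mul_cancel₀ s (ne_of_gt hT)
    have hskT : s < (k : ℝ) * T + T := by
      have h1 : s / T < (k:ℝ) + 1 := Int.lt_floor_add_one _
      have h2 : (s / T) * T < ((k:ℝ) + 1) * T := mul_lt_mul_of_pos_right h1 hT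
      rw [div_mul_cancel₀ s (ne_of_gt hT)] at h2
      linarith
    have hsplit : (∫ t in (0:ℝ)..s, g t) = (k : ℝ) * μ + ∫ t in ((k:ℝ)*T)..s, g t := by
      have h1 : (∫ t in (0:ℝ)..((k:ℝ)*T), g t) + (∫ t in ((k:ℝ)*T)..s, g t)
          = ∫ t in (0:ℝ)..s, g t :=
        intervalIntegral.integral_add_adjacent_intervals (hgint _ _) (hgint _ _)
      have h2 : (∫ t in (0:ℝ)..((k:ℝ)*T), g t) = (k:ℝ) * μ := by
        have h3 := hgper.intervalIntegral_add_zsmul_eq k 0 hgint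
        simp only [zero_add, zsmul_eq_mul] at h3
        rw [h3, hμdef]
      linarith
    have hr : |∫ t in ((k:ℝ)*T)..s, g t| ≤ B * T := by
      have h1 : ‖∫ t in ((k:ℝ)*T)..s, g t‖ ≤ B * |s - (k:ℝ)*T| :=
        intervalIntegral.norm_integral_le_of_norm_le_const (fun t _ => hgB t)
      have h2 : |s - (k:ℝ)*T| ≤ T := by
        rw [abs_of_nonneg (by linarith)]
        linarith
      exact le_trans h1 (mul_le_mul_of_nonneg_left h2 hB0)
    rw [Real.dist_eq, hsplit]
    have hμk : |(1/s) * ((k:ℝ)*μ) - μ/T| ≤ |μ| / s := by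
      have he : (1/s) * ((k:ℝ)*μ) - μ/T = μ * (((k:ℝ)*T - s) / (s*T)) := by
        field_simp
      rw [he, abs_mul]
      have h1 : |((k:ℝ)*T - s) / (s*T)| ≤ 1 / s := by
        rw [abs_div, abs_of_pos (mul_pos hs0 hT), div_le_div_iff₀ (mul_pos hs0 hT) hs0]
        have h2 : |(k:ℝ)*T - s| ≤ T := by
          rw [abs_sub_comm, abs_of_nonneg (by linarith)]
          linarith
        calc |(k:ℝ)*T - s| * s ≤ T * s := mul_le_mul_of_nonneg_right h2 hs0.le
          _ = 1 * (s*T) := by ring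
      calc |μ| * |((k:ℝ)*T - s) / (s*T)| ≤ |μ| * (1/s) :=
            mul_le_mul_of_nonneg_left h1 (abs_nonneg _)
        _ = |μ| / s := by ring
    calc |(1/s) * ((k:ℝ)*μ + ∫ t in ((k:ℝ)*T)..s, g t) - μ/T|
        = |((1/s)*((k:ℝ)*μ) - μ/T) + (1/s)*(∫ t in ((k:ℝ)*T)..s, g t)| := by
          congr 1
          ring
      _ ≤ |(1/s)*((k:ℝ)*μ) - μ/T| + |(1/s)*(∫ t in ((k:ℝ)*T)..s, g t)| := abs_add_le _ _
      _ ≤ |μ|/s + (1/s)*(B*T) := by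
          refine add_le_add hμk ?_
          rw [abs_mul, abs_of_pos (by positivity : (0:ℝ) < 1/s)]
          exact mul_le_mul_of_nonneg_left hr (by positivity)
      _ = D / s := by
          rw [hDdef]
          field_simp
  have h1 : timeAvg v u x = μ / T := by
    have heq : (fun s : ℝ => (1 / s) * ∫ t in (0:ℝ)..s, u (linFlow v t x)) =
        fun s : ℝ => (1 / s) * ∫ t in (0:ℝ)..s, g t := by
      funext s
      congr 1
      refine intervalIntegral.integral_congr (fun t _ => ?_)
      rw [hgdef, linFlow_eq]
    rw [timeAvg, heq]
    exact hlim.limUnder_eq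
  rw [h1]
  have h2 : (∫ t in (0:ℝ)..1, u (x + t • (((T • v : Fin n → ℝ), 0) : Phase n))) = T⁻¹ • μ := by
    have h3 : (fun t : ℝ => u (x + t • (((T • v : Fin n → ℝ), 0) : Phase n)))
        = fun t => g (T * t) := by
      funext t
      have h4 : t • (((T • v : Fin n → ℝ), 0) : Phase n) = (T*t) • ((v, 0) : Phase n) := by
        rw [← hTW, smul_smul, mul_comm]
      rw [hgdef, h4]
    rw [h3, intervalIntegral.integral_comp_mul_left g (ne_of_gt hT)]
    rw [hμdef]
    norm_num
  rw [h2, smul_eq_mul, inv_mul_eq_div]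


lemma chi_eq (hT : 0 < T) (hTv : IsIntVec (T • v)) (hu : PeriodicTheta u)
    (huc : ContinuousOn u (Dom n R)) {x : Phase n} (hx : x ∈ Dom n R) :
    chi n T v u x =
      ∫ t in (0:ℝ)..1, (T * t - T/2) • u (x + t • (((T • v : Fin n → ℝ), 0) : Phase n)) := by
  set W : Phase n := (((T • v : Fin n → ℝ), 0) : Phase n) with hWdef
  set φ : ℝ → ℝ := fun t => u (x + t • W) with hφdef
  have hmem : ∀ t : ℝ, x + t • W ∈ Dom n R := fun t => mem_dom_add hx _ t
  have hφc : Continuous φ := huc.comp_continuous (by fun_prop) hmem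
  have hφper : Function.Periodic φ 1 := by
    intro t
    show u (x + (t + 1) • W) = u (x + t • W)
    rw [add_smul, one_smul, ← add_assoc]
    exact uper hTv hu _
  set A : ℝ := ∫ t in (0:ℝ)..1, φ t with hAdef
  have hAvg : ∀ t : ℝ, timeAvg v u (linFlow (T • v) t x) = A := by
    intro t
    rw [linFlow_eq, timeAvg_eq hT hTv hu huc (hmem t)]
    have h1 : (fun t' : ℝ => u (x + t • W + t' • W)) = fun t' => φ (t' + t) := by
      funext t'
      rw [hφdef]
      congr 1
      rw [add_assoc, ← add_smul, add_comm t t']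
    rw [h1, intervalIntegral.integral_comp_add_right (fun r => φ r) t]
    rw [zero_add]
    have h2 := hφper.intervalIntegral_add_eq t 0
    rw [zero_add] at h2
    rw [show (1:ℝ) + t = t + 1 by ring, h2, hAdef]
  rw [chi]
  have h3 : (fun t : ℝ => (u (linFlow (T • v) t x) - timeAvg v u (linFlow (T • v) t x)) * t)
      = fun t : ℝ => t * φ t - A * t := by
    funext t
    rw [hAvg t, linFlow_eq]
    show (φ t - A) * t = t * φ t - A * t
    ring
  rw [h3]
  have hint1 : IntervalIntegrable (fun t : ℝ => t * φ t) MeasureTheory.volume 0 1 :=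
    ((continuous_id.mul hφc)).intervalIntegrable 0 1
  have hint2 : IntervalIntegrable (fun t : ℝ => A * t) MeasureTheory.volume 0 1 :=
    (continuous_const.mul continuous_id).intervalIntegrable 0 1
  rw [intervalIntegral.integral_sub hint1 hint2, intervalIntegral.integral_const_mul,
    integral_id]
  have h4 : (fun t : ℝ => (T * t - T/2) • φ t)
      = fun t : ℝ => T * (t * φ t) - (T/2) * φ t := by
    funext t
    rw [smul_eq_mul]
    ring
  rw [h4, intervalIntegral.integral_sub (Continuous.intervalIntegrable (by fun_prop) 0 1)
    (Continuous.intervalIntegrable (by fun_prop) 0 1),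
    intervalIntegral.integral_const_mul, intervalIntegral.integral_const_mul, ← hAdef]
  norm_num
  ring

end Avg


noncomputable instance instENormedCLMCMM (n m : ℕ) :
    ENormedAddMonoid (Phase n →L[ℝ] ContinuousMultilinearMap ℝ (fun _ : Fin m => Phase n) ℝ) :=
  @NormedAddGroup.toENormedAddMonoid
    (Phase n →L[ℝ] ContinuousMultilinearMap ℝ (fun _ : Fin m => Phase n) ℝ) _

section Taylor

variable {T : ℝ} {v : Fin n → ℝ} {u : Phase n → ℝ}

lemma eval_intervalIntegral {m : ℕ}
    {f : ℝ → ContinuousMultilinearMap ℝ (fun _ : Fin m => Phase n) ℝ}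
    (hf : IntervalIntegrable f MeasureTheory.volume 0 1) (vec : Fin m → Phase n) :
    (∫ t in (0:ℝ)..1, f t) vec = ∫ t in (0:ℝ)..1, (f t) vec := by
  have h1 := (ContinuousMultilinearMap.apply ℝ (fun _ : Fin m => Phase n) ℝ
    vec).intervalIntegral_comp_comm hf
  exact h1.symm

lemma hasTaylor_chi (hR : 0 < R) (hT : 0 < T) (hTv : IsIntVec (T • v)) (hu : PeriodicTheta u)
    (i : ℕ) (hui : ContDiffOn ℝ i u (Dom n R)) :
    HasFTaylorSeriesUpToOn i (chi n T v u)
      (fun x m => ∫ t in (0:ℝ)..1, (T * t - T/2) •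
        iteratedFDerivWithin ℝ m u (Dom n R) (x + t • (((T • v : Fin n → ℝ), 0) : Phase n)))
      (Dom n R) := by
  have hud := uniqueDiffOn_dom (n := n) hR
  have hq := hui.ftaylorSeriesWithin hud
  have hc : Continuous (fun t : ℝ => T * t - T/2) := by fun_prop
  set W : Phase n := (((T • v : Fin n → ℝ), 0) : Phase n) with hWdef
  constructor
  · intro x hx
    rw [ContinuousMultilinearMap.curry0_apply]
    have hint : IntervalIntegrable
        (fun t => (T * t - T/2) • iteratedFDerivWithin ℝ 0 u (Dom n R) (x + t • W))
        MeasureTheory.volume 0 1 := by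
      refine Continuous.intervalIntegrable (hc.smul ?_) 0 1
      exact (hq.cont 0 (by simp)).comp_continuous (by fun_prop) (fun t => mem_dom_add hx _ t)
    rw [eval_intervalIntegral hint 0]
    rw [chi_eq hT hTv hu hui.continuousOn hx]
    refine intervalIntegral.integral_congr (fun t ht => ?_)
    have hz := hq.zero_eq _ (mem_dom_add hx (T • v) t)
    rw [ContinuousMultilinearMap.curry0_apply] at hz
    rw [ContinuousMultilinearMap.smul_apply]
    rw [show (iteratedFDerivWithin ℝ 0 u (Dom n R) (x + t • W)) 0 = u (x + t • W) from hz]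
  · intro m hm x hx
    have hg' : ∀ y ∈ Dom n R, HasFDerivWithinAt
        (fun z => iteratedFDerivWithin ℝ m u (Dom n R) z)
        ((iteratedFDerivWithin ℝ (m+1) u (Dom n R) y).curryLeft) (Dom n R) y :=
      fun y hy => hq.fderivWithin m hm y hy
    have hgc : ContinuousOn (fun z => iteratedFDerivWithin ℝ m u (Dom n R) z) (Dom n R) :=
      hq.cont m (le_of_lt hm)
    have hm1 : ((m+1 : ℕ) : WithTop ℕ∞) ≤ i := by
      have : (m : ℕ) < i := by exact_mod_cast hm
      exact_mod_cast Nat.succ_le_of_lt this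
    set e := continuousMultilinearCurryLeftEquiv ℝ (fun _ : Fin (m+1) => Phase n) ℝ with hedef
    have hg'c : ContinuousOn
        (fun z => (iteratedFDerivWithin ℝ (m+1) u (Dom n R) z).curryLeft) (Dom n R) :=
      e.continuous.comp_continuousOn (hq.cont (m+1) hm1)
    have key := hasFDerivWithinAt_parametric (R := R) (a := T • v) hg' hgc hg'c hc hx
    have hint : IntervalIntegrable
        (fun t => (T * t - T/2) • iteratedFDerivWithin ℝ (m+1) u (Dom n R) (x + t • W))
        MeasureTheory.volume 0 1 := by
      refine Continuous.intervalIntegrable (hc.smul ?_) 0 1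
      exact (hq.cont (m+1) hm1).comp_continuous (by fun_prop) (fun t => mem_dom_add hx _ t)
    have hAcont : Continuous
        (fun t : ℝ => iteratedFDerivWithin ℝ (m+1) u (Dom n R) (x + t • W)) :=
      (hq.cont (m+1) hm1).comp_continuous (by fun_prop) (fun t => mem_dom_add hx _ t)
    have hint2 : IntervalIntegrable
        (fun t => (T * t - T/2) •
          (iteratedFDerivWithin ℝ (m+1) u (Dom n R) (x + t • W)).curryLeft)
        MeasureTheory.volume 0 1 := by
      have h := hc.smul (e.continuous.comp hAcont)
      exact Continuous.intervalIntegrable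
        (E := Phase n →L[ℝ] ContinuousMultilinearMap ℝ (fun _ : Fin m => Phase n) ℝ) h 0 1
    have hcomm : (∫ t in (0:ℝ)..1,
          (T * t - T/2) • iteratedFDerivWithin ℝ (m+1) u (Dom n R) (x + t • W)).curryLeft
        = ∫ t in (0:ℝ)..1,
          (T * t - T/2) • (iteratedFDerivWithin ℝ (m+1) u (Dom n R) (x + t • W)).curryLeft := by
      refine ContinuousLinearMap.ext fun z => ?_
      refine ContinuousMultilinearMap.ext fun w => ?_
      rw [ContinuousMultilinearMap.curryLeft_apply, eval_intervalIntegral hint (Fin.cons z w)]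
      rw [ContinuousLinearMap.intervalIntegral_apply hint2 z]
      have hint3 : IntervalIntegrable
          (fun t => ((T * t - T/2) •
            (iteratedFDerivWithin ℝ (m+1) u (Dom n R) (x + t • W)).curryLeft) z)
          MeasureTheory.volume 0 1 := by
        refine Continuous.intervalIntegrable ?_ 0 1
        exact (hc.smul (e.continuous.comp hAcont)).clm_apply continuous_const
      rw [eval_intervalIntegral hint3 w]
      refine intervalIntegral.integral_congr (fun t _ => ?_)
      simp
    exact hcomm ▸ key
  · intro m hmi
    exact continuousOn_parametric (hq.cont m hmi) hc

end Taylor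




/-- **The key identity `{χ, l_v} = u - [u]_v` and the estimate `|χ|_i ≤ T |u|_i`.** -/
theorem chi_identity
    (n : ℕ) (hn : 2 ≤ n) (R : ℝ) (hR : 0 < R)
    (v : Fin n → ℝ) (T : ℝ) (hT : 0 < T) (hTv : IsIntVec (T • v))
    (u : Phase n → ℝ) (hu : PeriodicTheta u) (hu1 : ContDiffOn ℝ 1 u (Dom n R)) :
    (∀ x ∈ Dom n R,
      ∑ j, v j * fderivWithin ℝ (chi n T v u) (Dom n R) x
        ((Pi.single j 1 : Fin n → ℝ), (0 : Fin n → ℝ)) = u x - timeAvg v u x) ∧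
    ∀ (i : ℕ) (M : ℝ), 1 ≤ i → 0 ≤ M →
      ContDiffOn ℝ i u (Dom n R) → DerivBoundsOn i u (Dom n R) M →
      ContDiffOn ℝ i (chi n T v u) (Dom n R) ∧
        DerivBoundsOn i (chi n T v u) (Dom n R) (T * M) := by
  have hud := uniqueDiffOn_dom (n := n) hR
  have hc : Continuous (fun t : ℝ => T * t - T/2) := by fun_prop
  set W : Phase n := (((T • v : Fin n → ℝ), 0) : Phase n) with hWdef
  constructor
  · -- the key identity
    intro x hx
    have hcd1 : ContDiffOn ℝ (1:ℕ) u (Dom n R) := by exact_mod_cast hu1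
    have hg' : ∀ y ∈ Dom n R, HasFDerivWithinAt u (fderivWithin ℝ u (Dom n R) y) (Dom n R) y :=
      fun y hy => ((hu1.differentiableOn (by norm_num)) y hy).hasFDerivWithinAt
    have hgc := hu1.continuousOn
    have hg'c : ContinuousOn (fderivWithin ℝ u (Dom n R)) (Dom n R) :=
      hu1.continuousOn_fderivWithin hud (by norm_num)
    have hD := hasFDerivWithinAt_parametric (R := R) (a := T • v) hg' hgc hg'c hc hx
    have hchi : HasFDerivWithinAt (chi n T v u)
        (∫ t in (0:ℝ)..1, (T * t - T/2) • fderivWithin ℝ u (Dom n R) (x + t • W))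
        (Dom n R) x :=
      hD.congr (fun y hy => chi_eq hT hTv hu hgc hy) (chi_eq hT hTv hu hgc hx)
    rw [hchi.fderivWithin (hud x hx)]
    have hDucont : Continuous (fun t : ℝ => fderivWithin ℝ u (Dom n R) (x + t • W)) :=
      hg'c.comp_continuous (by fun_prop) (fun t => mem_dom_add hx _ t)
    have hint : IntervalIntegrable
        (fun t => (T * t - T/2) • fderivWithin ℝ u (Dom n R) (x + t • W))
        MeasureTheory.volume 0 1 := (hc.smul hDucont).intervalIntegrable 0 1
    have happ : ∀ h : Phase n,
        (∫ t in (0:ℝ)..1, (T * t - T/2) • fderivWithin ℝ u (Dom n R) (x + t • W)) h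
          = ∫ t in (0:ℝ)..1, (T * t - T/2) * (fderivWithin ℝ u (Dom n R) (x + t • W) h) := by
      intro h
      rw [ContinuousLinearMap.intervalIntegral_apply hint h]
      refine intervalIntegral.integral_congr fun t _ => ?_
      simp
    set φ : ℝ → ℝ := fun t => u (x + t • W) with hφdef
    set φ' : ℝ → ℝ := fun t => fderivWithin ℝ u (Dom n R) (x + t • W) W with hφ'def
    have hφder : ∀ t : ℝ, HasDerivAt φ (φ' t) t := by
      intro t
      have h1 : HasDerivAt (fun r : ℝ => x + r • W) W t := by
        simpa using ((hasDerivAt_id t).smul_const W).const_add x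
      have h2 := (hg' _ (mem_dom_add hx _ t)).comp_hasDerivWithinAt t
        (h1.hasDerivWithinAt (s := univ)) (fun z _ => mem_dom_add hx _ z)
      have h3 : HasDerivAt (u ∘ fun r : ℝ => x + r • W) (φ' t) t := by
        rw [← hasDerivWithinAt_univ]
        exact h2
      exact h3
    have hφ'cont : Continuous φ' := hDucont.clm_apply continuous_const
    have hφcont : Continuous φ := hgc.comp_continuous (by fun_prop) (fun t => mem_dom_add hx _ t)
    have hψder : ∀ t : ℝ, HasDerivAt (fun r : ℝ => (r - 1/2) * φ r)
        (φ t + (t - 1/2) * φ' t) t := by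
      intro t
      have h1 := ((hasDerivAt_id t).sub_const (1/2 : ℝ)).mul (hφder t)
      exact h1.congr_deriv (by simp only [id_eq, one_mul])
    have hFTC : (∫ t in (0:ℝ)..1, (φ t + (t - 1/2) * φ' t))
        = (1 - 1/2) * φ 1 - (0 - 1/2) * φ 0 :=
      intervalIntegral.integral_eq_sub_of_hasDerivAt (fun t _ => hψder t)
        (Continuous.intervalIntegrable (by fun_prop) 0 1)
    have hsplit : (∫ t in (0:ℝ)..1, (φ t + (t - 1/2) * φ' t))
        = (∫ t in (0:ℝ)..1, φ t) + ∫ t in (0:ℝ)..1, (t - 1/2) * φ' t :=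
      intervalIntegral.integral_add (hφcont.intervalIntegrable 0 1)
        (Continuous.intervalIntegrable (by fun_prop) 0 1)
    have hφ1 : φ 1 = u x := by
      show u (x + (1:ℝ) • W) = u x
      rw [one_smul, hWdef]
      exact uper hTv hu x
    have hφ0 : φ 0 = u x := by
      show u (x + (0:ℝ) • W) = u x
      rw [zero_smul, add_zero]
    have hAvg : timeAvg v u x = ∫ t in (0:ℝ)..1, φ t := timeAvg_eq hT hTv hu hgc hx
    have hmain : (∫ t in (0:ℝ)..1, (t - 1/2) * φ' t) = u x - timeAvg v u x := by
      rw [hAvg]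
      have h5 := hFTC
      rw [hsplit, hφ1, hφ0] at h5
      linarith
    have hv : ((v, (0 : Fin n → ℝ)) : Phase n)
        = ∑ j, v j • (((Pi.single j (1:ℝ) : Fin n → ℝ), (0 : Fin n → ℝ)) : Phase n) := by
      refine Prod.ext ?_ ?_
      · simp only [Prod.fst_sum, Prod.smul_fst]
        funext k
        rw [Finset.sum_apply]
        simp [Pi.single_apply]
      · rw [Prod.snd_sum]
        simp
    have hTW : W = T • ((v, (0 : Fin n → ℝ)) : Phase n) := by
      rw [hWdef, smul_pair]
    calc ∑ j, v j * (∫ t in (0:ℝ)..1,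
            (T * t - T/2) • fderivWithin ℝ u (Dom n R) (x + t • W))
          ((Pi.single j 1 : Fin n → ℝ), (0 : Fin n → ℝ))
        = ∑ j, ∫ t in (0:ℝ)..1, v j * ((T * t - T/2) *
            (fderivWithin ℝ u (Dom n R) (x + t • W)
              ((Pi.single j 1 : Fin n → ℝ), (0 : Fin n → ℝ)))) := by
          refine Finset.sum_congr rfl fun j _ => ?_
          rw [happ, ← intervalIntegral.integral_const_mul]
      _ = ∫ t in (0:ℝ)..1, ∑ j, v j * ((T * t - T/2) *
            (fderivWithin ℝ u (Dom n R) (x + t • W)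
              ((Pi.single j 1 : Fin n → ℝ), (0 : Fin n → ℝ)))) := by
          rw [intervalIntegral.integral_finset_sum]
          intro j _
          refine Continuous.intervalIntegrable ?_ 0 1
          exact continuous_const.mul (hc.mul (hDucont.clm_apply continuous_const))
      _ = ∫ t in (0:ℝ)..1, (t - 1/2) * φ' t := by
          refine intervalIntegral.integral_congr fun t _ => ?_
          have hmap : (fderivWithin ℝ u (Dom n R) (x + t • W)) ((v, (0 : Fin n → ℝ)) : Phase n)
              = ∑ j, v j * (fderivWithin ℝ u (Dom n R) (x + t • W)
                  ((Pi.single j 1 : Fin n → ℝ), (0 : Fin n → ℝ))) := by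
            rw [hv, map_sum]
            refine Finset.sum_congr rfl fun j _ => ?_
            rw [map_smul, smul_eq_mul]
          have h2 : φ' t = T * ((fderivWithin ℝ u (Dom n R) (x + t • W))
              ((v, (0 : Fin n → ℝ)) : Phase n)) := by
            rw [hφ'def]
            show (fderivWithin ℝ u (Dom n R) (x + t • W)) W = _
            rw [hTW, map_smul, smul_eq_mul]
          rw [h2, hmap, Finset.mul_sum, Finset.mul_sum]
          refine Finset.sum_congr rfl fun j _ => by ring
      _ = u x - timeAvg v u x := hmain
  · -- the estimate
    intro i M hi hM hui hbd
    have H := hasTaylor_chi hR hT hTv hu i hui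
    constructor
    · have h1 : ContDiffOn ℝ ((i : ℕ∞) : WithTop ℕ∞) (chi n T v u) (Dom n R) :=
        HasFTaylorSeriesUpToOn.contDiffOn (by exact_mod_cast H)
      exact_mod_cast h1
    · intro m hmi x hx
      rw [← H.eq_iteratedFDerivWithin_of_uniqueDiffOn (by exact_mod_cast hmi) hud hx]
      refine le_trans
        (intervalIntegral.norm_integral_le_of_norm_le_const (C := T * M) ?_) ?_
      · intro t ht
        rw [uIoc_of_le zero_le_one] at ht
        have h2 : ‖iteratedFDerivWithin ℝ m u (Dom n R) (x + t • W)‖ ≤ M :=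
          hbd m hmi _ (mem_dom_add hx _ t)
        have h3 : ‖T * t - T/2‖ ≤ T := by
          rw [Real.norm_eq_abs, abs_le]
          constructor <;> nlinarith [ht.1, ht.2]
        exact le_trans (norm_smul_le (T * t - T/2)
          (iteratedFDerivWithin ℝ m u (Dom n R) (x + t • W)))
          (mul_le_mul h3 h2 (norm_nonneg _) hT.le)
      · simp


end NFpaper
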